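/- Let G be a finite 2-group of order at least 4. Then G is cyclic if and only if G has a unique subgroup of order 4 and that subgroup is cyclic. -/

import Mathlib

lemma nt_aux {m : ℕ} (hm : 2 ≤ m) {s t : ℤ} (h1 : (2^m : ℤ) ∣ s*s - 1)
    (h2 : (2^m : ℤ) ∣ t*(s-1)) :
    (∃ a : ℤ, (2^(m-1) : ℤ) ∣ t + a*(s+1)) ∨ ((2^m : ℤ) ∣ s - 1 ∧ ¬ (2:ℤ) ∣ t) := by
  by_cases ht : (2:ℤ) ∣ t
  · left
    have hs_odd : ¬ (2:ℤ) ∣ s := by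
      rintro ⟨c, hc⟩
      have h4 : (4:ℤ) ∣ s*s - 1 := by
        refine dvd_trans ?_ h1
        have : (4:ℤ) = 2^2 := by norm_num
        rw [this]; exact pow_dvd_pow 2 hm
      obtain ⟨w, hw⟩ := h4
      have : (4:ℤ) ∣ 1 := ⟨c*c - w, by subst hc; linarith⟩
      norm_num at this
    obtain ⟨c, hc⟩ : ∃ c, s = 2*c + 1 := ⟨(s-1)/2, by omega⟩
    obtain ⟨t₁, ht₁⟩ := ht
    rcases Int.even_or_odd c with ⟨d, hd⟩ | ⟨d, hd⟩
    · have hcop : IsCoprime (2*d+1 : ℤ) ((2:ℤ)^(m-2)) :=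
        IsCoprime.pow_right (⟨1, -d, by ring⟩ : IsCoprime (2*d+1:ℤ) 2)
      obtain ⟨u, v, huv⟩ := hcop
      refine ⟨-(t₁*u), ⟨t₁ * v, ?_⟩⟩
      have e : ((2:ℤ)^(m-1)) = 2 * 2^(m-2) := by
        rw [← pow_succ']; congr 1; omega
      rw [e, ht₁, hc, hd]
      linear_combination (-2*t₁) * huv
    · refine ⟨0, ?_⟩
      have e : ((2:ℤ)^m) = 2 * 2^(m-1) := by
        rw [← pow_succ']; congr 1; omega
      have h2' : ((2:ℤ)^(m-1)) ∣ t * (2*d+1) := by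
        obtain ⟨w, hw⟩ := h2
        refine ⟨w, ?_⟩
        rw [e] at hw
        have : 2 * (t * (2*d+1)) = 2 * (2^(m-1) * w) := by
          rw [hc, hd] at hw; linarith
        exact mul_left_cancel₀ two_ne_zero this
      have hcop : IsCoprime ((2:ℤ)^(m-1)) (2*d+1 : ℤ) :=
        IsCoprime.pow_left (⟨-d, 1, by ring⟩ : IsCoprime (2:ℤ) (2*d+1))
      simpa using hcop.dvd_of_dvd_mul_right h2'
  · right
    refine ⟨?_, ht⟩
    obtain ⟨e, he⟩ : ∃ e, t = 2*e + 1 := ⟨(t-1)/2, by omega⟩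
    have hcop : IsCoprime ((2:ℤ)^m) t :=
      IsCoprime.pow_left (⟨-e, 1, by rw [he]; ring⟩ : IsCoprime (2:ℤ) t)
    exact hcop.dvd_of_dvd_mul_left h2

open Subgroup

lemma ord_pow_four {G : Type*} [Group G] [Finite G] {g : G} {m : ℕ} (hm : 2 ≤ m)
    (h : orderOf g = 2^m) : orderOf (g ^ (2^(m-2))) = 4 := by
  rw [orderOf_pow, h, Nat.gcd_eq_right (pow_dvd_pow 2 (by omega)),
    Nat.pow_div (by omega) (by norm_num), show m - (m-2) = 2 by omega]

lemma mem_iff_pow_four {G : Type*} [Group G] [Fintype G] [IsCyclic G] (K : Subgroup G)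
    (hK : Nat.card K = 4) (y : G) : y ∈ K ↔ y ^ 4 = 1 := by
  classical
  constructor
  · intro hy
    have h1 : (⟨y, hy⟩ : K) ^ 4 = 1 := by
      rw [show (4 : ℕ) = Fintype.card K by rw [← Nat.card_eq_fintype_card, hK]]
      exact pow_card_eq_one
    have := congrArg (Subtype.val) h1
    simpa using this
  · intro hy
    have hT := IsCyclic.card_pow_eq_one_le (α := G) (n := 4) (by norm_num)
    have hsub : (K : Set G).toFinset ⊆ Finset.univ.filter (fun a => a ^ 4 = 1) := by
      intro z hz
      simp only [Set.mem_toFinset, SetLike.mem_coe] at hz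
      simp only [Finset.mem_filter, Finset.mem_univ, true_and]
      have h1 : (⟨z, hz⟩ : K) ^ 4 = 1 := by
        rw [show (4 : ℕ) = Fintype.card K by rw [← Nat.card_eq_fintype_card, hK]]
        exact pow_card_eq_one
      have := congrArg (Subtype.val) h1
      simpa using this
    have hcard : ((K : Set G).toFinset).card = 4 := by
      rw [Set.toFinset_card, ← Nat.card_eq_fintype_card]
      rw [← hK]
      exact Nat.card_congr (Equiv.refl _)
    have heq : (K : Set G).toFinset = Finset.univ.filter (fun a => a ^ 4 = 1) :=
      Finset.eq_of_subset_of_card_le hsub (by rw [hcard]; exact hT)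
    have : y ∈ (K : Set G).toFinset := by
      rw [heq]; simp [hy]
    simpa using this

theorem fwd {G : Type*} [Group G] [Fintype G] {k : ℕ} (hk : 2 ≤ k)
    (hcard : Fintype.card G = 2 ^ k) (hG : IsCyclic G) :
    ∃ H : Subgroup G, Nat.card H = 4 ∧ IsCyclic H ∧
      ∀ H' : Subgroup G, Nat.card H' = 4 → H' = H := by
  obtain ⟨g, hg⟩ := IsCyclic.exists_ofOrder_eq_natCard (α := G)
  rw [Nat.card_eq_fintype_card, hcard] at hg
  have hx : orderOf (g ^ (2^(k-2))) = 4 := ord_pow_four hk hg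
  refine ⟨Subgroup.zpowers (g ^ (2^(k-2))), by rw [Nat.card_zpowers, hx], inferInstance, ?_⟩
  intro H' hH'
  ext y
  rw [mem_iff_pow_four H' hH', mem_iff_pow_four _ (by rw [Nat.card_zpowers, hx])]

open Subgroup

theorem bwd {G : Type*} [Group G] [Fintype G] {k : ℕ} (hk : 2 ≤ k)
    (hcard : Fintype.card G = 2 ^ k)
    (H : Subgroup G) (hH4 : Nat.card H = 4) (hHcyc : IsCyclic H)
    (huniq : ∀ H' : Subgroup G, Nat.card H' = 4 → H' = H) : IsCyclic G := by
  classical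
  have hcard' : Nat.card G = 2 ^ k := by rw [Nat.card_eq_fintype_card, hcard]
  -- every element's order is a power of 2
  have hord2 : ∀ y : G, ∃ j, orderOf y = 2 ^ j := by
    intro y
    have h1 : orderOf y ∣ 2 ^ k := by
      rw [← hcard]; exact orderOf_dvd_card
    obtain ⟨j, _, hj⟩ := (Nat.dvd_prime_pow Nat.prime_two).mp h1
    exact ⟨j, hj⟩
  -- key: every solution of y^4 = 1 lies in H
  have key : ∀ y : G, y ^ 4 = 1 → y ∈ H := by
    intro y hy
    have h1 : orderOf y ∣ 2 ^ 2 := by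
      have := orderOf_dvd_of_pow_eq_one hy; simpa using this
    obtain ⟨n, hn2, hn⟩ := (Nat.dvd_prime_pow Nat.prime_two).mp h1
    have : Fact (Nat.Prime 2) := ⟨Nat.prime_two⟩
    obtain ⟨K, hK, hKle⟩ := Sylow.exists_subgroup_card_pow_prime_le 2
      (n := n) (m := 2) (by rw [hcard']; exact pow_dvd_pow 2 hk)
      (Subgroup.zpowers y) (by rw [Nat.card_zpowers, hn]) hn2
    have := huniq K (by rw [hK]; norm_num)
    exact this ▸ hKle (Subgroup.mem_zpowers y)
  -- element of maximal order
  obtain ⟨g, -, hgmax⟩ := Finset.exists_max_image (Finset.univ : Finset G) orderOf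
    ⟨1, Finset.mem_univ 1⟩
  obtain ⟨m, hm⟩ := hord2 g
  have hmax : ∀ y : G, orderOf y ∣ 2 ^ m := by
    intro y
    obtain ⟨j, hj⟩ := hord2 y
    have : (2:ℕ) ^ j ≤ 2 ^ m := by
      rw [← hj, ← hm]; exact hgmax y (Finset.mem_univ y)
    rw [hj]
    exact pow_dvd_pow 2 (by
      exact (Nat.pow_le_pow_iff_right (by norm_num)).mp this)
  -- m ≥ 2
  have hm2 : 2 ≤ m := by
    obtain ⟨h0, hh0⟩ := IsCyclic.exists_ofOrder_eq_natCard (α := H)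
    rw [hH4] at hh0
    have h4 : orderOf (h0 : G) = 4 := by
      rw [← hh0]; exact (Subgroup.orderOf_coe h0).symm ▸ rfl
    have : (4:ℕ) ∣ 2 ^ m := h4 ▸ hmax (h0 : G)
    have : (2:ℕ)^2 ∣ 2^m := by norm_num at this ⊢; exact this
    exact (Nat.pow_dvd_pow_iff_le_right (by norm_num)).mp this
  by_cases hmk : m = k
  · exact isCyclic_of_orderOf_eq_card g (by rw [hm, hcard', hmk])
  · exfalso
    have hmlek : m ≤ k := by
      have h1 : (2:ℕ)^m ∣ 2^k := by
        rw [← hm, ← hcard]; exact orderOf_dvd_card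
      exact (Nat.pow_dvd_pow_iff_le_right (by norm_num)).mp h1
    have hmk' : m < k := lt_of_le_of_ne hmlek hmk
    set P := Subgroup.zpowers g with hPdef
    -- H ≤ P
    have hHP : H ≤ P := by
      have h4 : orderOf (g ^ (2^(m-2))) = 4 := ord_pow_four hm2 hm
      have := huniq (Subgroup.zpowers (g ^ (2^(m-2)))) (by rw [Nat.card_zpowers, h4])
      rw [← this]
      exact Subgroup.zpowers_le.mpr (Subgroup.mem_zpowers_iff.mpr ⟨(2^(m-2) : ℕ), by norm_cast⟩)
    have hPcard : Nat.card P = 2^m := by rw [Nat.card_zpowers, hm]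
    have : Fact (Nat.Prime 2) := ⟨Nat.prime_two⟩
    obtain ⟨K, hK, hPK⟩ := Sylow.exists_subgroup_card_pow_prime_le 2 (n := m) (m := m+1)
      (by rw [hcard']; exact pow_dvd_pow 2 (by omega)) P hPcard (by omega)
    set P' := P.subgroupOf K with hP'def
    have hP'card : Nat.card P' = 2^m := by
      rw [← hPcard]
      exact Nat.card_congr (Subgroup.subgroupOfEquivOfLe hPK).toEquiv
    have hidx : P'.index = 2 := by
      have h1 := Subgroup.card_mul_index P'
      rw [hP'card, hK, pow_succ] at h1
      have h2 : (0:ℕ) < 2^m := by positivity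
      exact Nat.eq_of_mul_eq_mul_left h2 h1
    -- pick x' outside P'
    obtain ⟨x', hx'⟩ : ∃ x' : K, x' ∉ P' := by
      by_contra hcon
      push_neg at hcon
      have htop : P' = ⊤ := by ext z; simp [hcon z]
      have := hP'card
      rw [htop, Subgroup.card_top, hK] at this
      have h2 : (0:ℕ) < 2^m := by positivity
      rw [pow_succ] at this
      omega
    have hconj : ∀ w : K, w ∉ P' → ∀ q : K, q ∈ P' → w * q * w⁻¹ ∈ P' := by
      intro w hw q hq
      have h1 := Subgroup.mul_mem_iff_of_index_two hidx (a := w*q) (b := w⁻¹)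
      have h2 := Subgroup.mul_mem_iff_of_index_two hidx (a := w) (b := q)
      have hwi : w⁻¹ ∈ P' ↔ w ∈ P' := P'.inv_mem_iff
      tauto
    set x : G := (x' : G) with hxdef
    have hxP : x ∉ P := fun h => hx' (Subgroup.mem_subgroupOf.mpr h)
    have hx2P : x^2 ∈ P := by
      have := Subgroup.sq_mem_of_index_two hidx x'
      have h2 := Subgroup.mem_subgroupOf.mp this
      simpa using h2
    have hgK : g ∈ K := hPK (Subgroup.mem_zpowers g)
    have hg'P' : (⟨g, hgK⟩ : K) ∈ P' := Subgroup.mem_subgroupOf.mpr (Subgroup.mem_zpowers g)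
    have hc1 : x * g * x⁻¹ ∈ P := by
      have := hconj x' hx' ⟨g, hgK⟩ hg'P'
      have h2 := Subgroup.mem_subgroupOf.mp this
      simpa using h2
    have hc2 : x⁻¹ * g * x ∈ P := by
      have hxi : x'⁻¹ ∉ P' := fun h => hx' (P'.inv_mem_iff.mp h)
      have := hconj x'⁻¹ hxi ⟨g, hgK⟩ hg'P'
      have h2 := Subgroup.mem_subgroupOf.mp this
      simpa using h2
    obtain ⟨s, hs⟩ := Subgroup.mem_zpowers_iff.mp hc1
    obtain ⟨s₂, hs₂⟩ := Subgroup.mem_zpowers_iff.mp hc2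
    obtain ⟨t, htg⟩ := Subgroup.mem_zpowers_iff.mp hx2P
    have dvd_iff : ∀ i : ℤ, ((2^m : ℤ) ∣ i) ↔ g ^ i = 1 := by
      intro i
      rw [← orderOf_dvd_iff_zpow_eq_one, hm]
      norm_cast
    have htg' : g ^ t = x * x := by rw [htg]; exact pow_two x
    have e1 : g ^ (s*s) = g := by
      calc g^(s*s) = x*(x*g*x⁻¹)*x⁻¹ := by rw [zpow_mul, hs, conj_zpow, hs]
      _ = (x*x)*g*(x*x)⁻¹ := by group
      _ = g^t*g*(g^t)⁻¹ := by rw [htg']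
      _ = g := by group
    have d1 : (2^m:ℤ) ∣ s*s - 1 := by
      rw [dvd_iff, zpow_sub, e1, zpow_one, mul_inv_cancel]
    have e2 : g ^ (s*t) = g ^ t := by
      rw [zpow_mul, hs, conj_zpow, htg']
      group
    have d2 : (2^m:ℤ) ∣ t*(s-1) := by
      rw [dvd_iff, show t*(s-1) = s*t - t by ring, zpow_sub, e2, mul_inv_cancel]
    have e3 : g ^ (s*s₂) = g := by
      rw [zpow_mul, hs, conj_zpow, hs₂]
      group
    have d3 : (2^m:ℤ) ∣ s*s₂ - 1 := by
      rw [dvd_iff, zpow_sub, e3, zpow_one, mul_inv_cancel]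
    have d4 : (2^m:ℤ) ∣ s₂ - s := by
      rw [show s₂ - s = s*(s*s₂-1) - s₂*(s*s-1) by ring]
      exact dvd_sub (d3.mul_left s) (d1.mul_left s₂)
    have hpow2m : ((2:ℤ)^m) = 2 * 2^(m-1) := by
      rw [← pow_succ']; congr 1; omega
    rcases nt_aux hm2 d1 d2 with ⟨a, ha⟩ | ⟨hs1, ht2⟩
    · -- y = x * g^a has y^4 = 1 but lies outside P
      have hconj2 : x⁻¹ * g^a * x = g^(s₂ * a) := by
        have h0 := conj_zpow (i := a) (a := x⁻¹) (b := g)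
        rw [inv_inv] at h0
        rw [← h0, ← hs₂, ← zpow_mul]
      have y2 : (x*g^a)*(x*g^a) = g^(t + s₂*a + a) := by
        rw [show (x*g^a)*(x*g^a) = (x*x)*(x⁻¹*g^a*x)*g^a from by group, hconj2, ← htg',
          ← zpow_add, ← zpow_add]
      have y4 : (x*g^a)^4 = 1 := by
        have h4 : (x*g^a)^4 = ((x*g^a)*(x*g^a)) * ((x*g^a)*(x*g^a)) := by
          rw [show (4:ℕ) = 2+2 from rfl, pow_add, pow_two]
        rw [h4, y2, ← zpow_add, ← dvd_iff]
        have dA : (2^m:ℤ) ∣ 2*(t + a*(s+1)) := by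
          obtain ⟨w, hw⟩ := ha
          exact ⟨w, by rw [hpow2m, hw]; ring⟩
        have dB : (2^m:ℤ) ∣ a*(s₂ - s) := d4.mul_left a
        have hsum : (t + s₂*a + a) + (t + s₂*a + a)
            = 2*(t + a*(s+1)) + (a*(s₂-s) + a*(s₂-s)) := by ring
        rw [hsum]
        exact dvd_add dA (dvd_add dB dB)
      have hyP : x*g^a ∈ P := hHP (key _ y4)
      apply hxP
      have hxeq : x = (x*g^a) * (g^a)⁻¹ := by group
      rw [hxeq]
      exact P.mul_mem hyP (P.inv_mem (Subgroup.mem_zpowers_iff.mpr ⟨a, rfl⟩))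
    · -- x^2 = g^t with t odd forces too-large order
      obtain ⟨j, hj⟩ := hord2 x
      have hj0 : j ≠ 0 := by
        intro h0
        apply hxP
        rw [h0, pow_zero] at hj
        rw [orderOf_eq_one_iff.mp hj]
        exact P.one_mem
      have hjm : j ≤ m := by
        have h1 : (2:ℕ)^j ∣ 2^m := hj ▸ hmax x
        exact (Nat.pow_dvd_pow_iff_le_right (by norm_num)).mp h1
      have hordx2 : orderOf (x^2) = 2^(j-1) := by
        rw [orderOf_pow, hj, Nat.gcd_eq_right (dvd_pow_self 2 hj0),
          show (2:ℕ)^j = 2^(j-1) * 2 by rw [← pow_succ]; congr 1; omega,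
          Nat.mul_div_cancel _ (by norm_num)]
      have hone : (x^2)^(2^(m-1)) = 1 := by
        apply orderOf_dvd_iff_pow_eq_one.mp
        rw [hordx2]
        exact pow_dvd_pow 2 (by omega)
      have hgone : g ^ (t * ((2^(m-1) : ℕ) : ℤ)) = 1 := by
        rw [zpow_mul, htg, zpow_natCast, hone]
      have hdvd2 : (2^m:ℤ) ∣ t * 2^(m-1) := by
        have := (dvd_iff _).mpr hgone
        simpa using this
      apply ht2
      obtain ⟨w, hw⟩ := hdvd2
      refine ⟨w, ?_⟩
      rw [hpow2m] at hw
      have hne : ((2:ℤ)^(m-1)) ≠ 0 := by positivity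
      have : t * 2^(m-1) = (2*w) * 2^(m-1) := by rw [hw]; ring
      exact mul_right_cancel₀ hne this


theorem stmt_8 {G : Type*} [Group G] [Fintype G] {k : ℕ} (hk : 2 ≤ k)
    (hcard : Fintype.card G = 2 ^ k) :
    IsCyclic G ↔ ∃ H : Subgroup G, Nat.card H = 4 ∧ IsCyclic H ∧
      ∀ H' : Subgroup G, Nat.card H' = 4 → H' = H := by
  constructor
  · exact fwd hk hcard
  · rintro ⟨H, hH4, hHcyc, huniq⟩
    exact bwd hk hcard H hH4 hHcyc huniq
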